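/- Suppose q > 0 and F is strictly decreasing on {1,…,N}, i.e., F(n) > F(n+1) for 1 ≤ n ≤ N−1. Let p be a Bayes–Nash equilibrium at belief q, and let i < j be two agents with 0 < p_i < 1 and 0 < p_j < 1. Then p_i ≤ p_j. -/
import Mathlib


open Finset

noncomputable section

open scoped Classical

/-- Agent `i`'s expected utility for moving, when the other agents `{1,…,N}∖{i}`
independently move with probabilities `p j` and the common belief that θ = 1 is `q`. -/
def moveUtil (N : ℕ) (F r : ℕ → ℝ) (q : ℝ) (p : ℕ → ℝ) (i : ℕ) : ℝ :=
  q * ∑ T ∈ ((Icc 1 N).erase i).powerset,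
      (∏ j ∈ T, p j) * (∏ j ∈ ((Icc 1 N).erase i) \ T, (1 - p j)) * F (T.card + 1)
    - r i

/-- A Bayes–Nash equilibrium at common belief `q`: a profile `p ∈ [0,1]^N` such that
any agent with strictly positive (resp. negative) utility for moving moves (stays)
with probability one. -/
def IsBNE (N : ℕ) (F r : ℕ → ℝ) (q : ℝ) (p : ℕ → ℝ) : Prop :=
  (∀ i ∈ Icc 1 N, 0 ≤ p i ∧ p i ≤ 1) ∧
  ∀ i ∈ Icc 1 N,
    (0 < moveUtil N F r q p i → p i = 1) ∧
    (moveUtil N F r q p i < 0 → p i = 0)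

/-- `i_ub(q) = max{ i ∈ {0,…,N} : q·F(i) − r(i) ≥ 0 }` (the junk value 0 if empty). -/
def iUB (N : ℕ) (F r : ℕ → ℝ) (q : ℝ) : ℕ :=
  ((range (N + 1)).filter (fun i => 0 ≤ q * F i - r i)).sup id

/-- `i_lb(q) = max{ i ∈ {0,…,N} : q·F(i) − r(i) > 0 }`, with value 0 if empty. -/
def iLB (N : ℕ) (F r : ℕ → ℝ) (q : ℝ) : ℕ :=
  ((range (N + 1)).filter (fun i => 0 < q * F i - r i)).sup id

/-- in any BNE, among agents who strictly randomize, an agent with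
smaller index (hence weakly smaller moving cost) moves with weakly smaller
probability. -/
lemma mysplit (p g : ℕ → ℝ) (S : Finset ℕ) (x : ℕ) (hx : x ∉ S) :
    ∑ T ∈ (insert x S).powerset, (∏ k ∈ T, p k) * (∏ k ∈ insert x S \ T, (1 - p k)) * g T.card
    = (1 - p x) * (∑ T ∈ S.powerset, (∏ k ∈ T, p k) * (∏ k ∈ S \ T, (1 - p k)) * g T.card)
    + p x * (∑ T ∈ S.powerset, (∏ k ∈ T, p k) * (∏ k ∈ S \ T, (1 - p k)) * g (T.card + 1)) := by
  rw [Finset.sum_powerset_insert hx, Finset.mul_sum, Finset.mul_sum]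
  congr 1
  · apply Finset.sum_congr rfl
    intro T hT
    have hTS : T ⊆ S := Finset.mem_powerset.mp hT
    have hxT : x ∉ T := fun h => hx (hTS h)
    have h1 : insert x S \ T = insert x (S \ T) := by
      ext y; simp only [Finset.mem_sdiff, Finset.mem_insert]
      constructor
      · rintro ⟨h | h, h2⟩ <;> simp_all
      · rintro (rfl | ⟨h1, h2⟩) <;> simp_all
    have h2 : x ∉ S \ T := by simp [hx]
    rw [h1, Finset.prod_insert h2]
    ring
  · apply Finset.sum_congr rfl
    intro T hT
    have hTS : T ⊆ S := Finset.mem_powerset.mp hT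
    have hxT : x ∉ T := fun h => hx (hTS h)
    have h1 : insert x S \ insert x T = S \ T := by
      ext y; simp only [Finset.mem_sdiff, Finset.mem_insert, not_or]
      constructor
      · rintro ⟨h | h, h2, h3⟩ <;> simp_all
      · rintro ⟨h1, h2⟩
        refine ⟨Or.inr h1, fun h => ?_, h2⟩
        subst h; exact hx h1
    rw [h1, Finset.prod_insert hxT, Finset.card_insert_of_notMem hxT]
    ring

theorem stmt10 (N : ℕ) (hN : 1 ≤ N) (F r : ℕ → ℝ)
    (hFnn : ∀ n, n ≤ N → 0 ≤ F n) (hF01 : F 0 = F 1)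
    (hFmono : ∀ n, n + 1 ≤ N → F (n + 1) ≤ F n)
    (hFstrict : ∀ n, 1 ≤ n → n + 1 ≤ N → F (n + 1) < F n)
    (hr0 : r 0 = 0) (hrnn : ∀ i, i ≤ N → 0 ≤ r i)
    (hrmono : ∀ i, i + 1 ≤ N → r i ≤ r (i + 1))
    (q : ℝ) (hq0 : 0 < q) (hq1 : q ≤ 1)
    (p : ℕ → ℝ) (hBNE : IsBNE N F r q p)
    (i j : ℕ) (hi : i ∈ Icc 1 N) (hj : j ∈ Icc 1 N) (hij : i < j)
    (hpi0 : 0 < p i) (hpi1 : p i < 1) (hpj0 : 0 < p j) (hpj1 : p j < 1) :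
    p i ≤ p j := by
  obtain ⟨hbd, heq⟩ := hBNE
  -- utilities are zero
  have hUi : moveUtil N F r q p i = 0 := by
    rcases lt_trichotomy (moveUtil N F r q p i) 0 with h | h | h
    · exact absurd ((heq i hi).2 h) (by linarith)
    · exact h
    · exact absurd ((heq i hi).1 h) (by linarith)
  have hUj : moveUtil N F r q p j = 0 := by
    rcases lt_trichotomy (moveUtil N F r q p j) 0 with h | h | h
    · exact absurd ((heq j hj).2 h) (by linarith)
    · exact h
    · exact absurd ((heq j hj).1 h) (by linarith)
  have hne : i ≠ j := Nat.ne_of_lt hij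
  set S : Finset ℕ := ((Icc 1 N).erase i).erase j with hS
  have hjS : j ∉ S := Finset.notMem_erase _ _
  have hiS : i ∉ S := fun h =>
    Finset.notMem_erase i (Icc 1 N) (Finset.mem_of_mem_erase h)
  have hins_j : insert j S = (Icc 1 N).erase i :=
    Finset.insert_erase (Finset.mem_erase.mpr ⟨(Nat.ne_of_lt hij).symm, hj⟩)
  have hins_i : insert i S = (Icc 1 N).erase j := by
    rw [hS, Finset.erase_right_comm]
    exact Finset.insert_erase (Finset.mem_erase.mpr ⟨hne, hi⟩)
  have hSsub : S ⊆ Icc 1 N := fun x hx =>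
    Finset.mem_of_mem_erase (Finset.mem_of_mem_erase hx)
  -- weights
  set w : Finset ℕ → ℝ := fun T => (∏ k ∈ T, p k) * (∏ k ∈ S \ T, (1 - p k)) with hw
  have hwnn : ∀ T ∈ S.powerset, 0 ≤ w T := by
    intro T hT
    have hTS : T ⊆ S := Finset.mem_powerset.mp hT
    apply mul_nonneg
    · exact Finset.prod_nonneg fun k hk => (hbd k (hSsub (hTS hk))).1
    · exact Finset.prod_nonneg fun k hk => by
        have := (hbd k (hSsub (Finset.mem_sdiff.mp hk).1)).2; linarith
  have hwsum : ∑ T ∈ S.powerset, w T = 1 := by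
    have := Finset.prod_add p (fun k => 1 - p k) S
    simp only [hw]
    rw [← this]
    simp
  -- card bound
  have hN2 : 2 ≤ N := by
    simp only [Finset.mem_Icc] at hi hj; omega
  have hScard : S.card = N - 2 := by
    rw [hS, Finset.card_erase_of_mem (Finset.mem_erase.mpr ⟨(Nat.ne_of_lt hij).symm, hj⟩),
      Finset.card_erase_of_mem hi, Nat.card_Icc]
    omega
  set A : ℝ := ∑ T ∈ S.powerset, w T * F (T.card + 2) with hA
  set B : ℝ := ∑ T ∈ S.powerset, w T * F (T.card + 1) with hB
  have hAB : A < B := by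
    have hex : ∃ T ∈ S.powerset, (0:ℝ) < w T := by
      by_contra hc
      push_neg at hc
      have : ∑ T ∈ S.powerset, w T ≤ 0 :=
        Finset.sum_nonpos fun T hT => hc T hT
      linarith
    obtain ⟨T₀, hT₀, hwT₀⟩ := hex
    apply Finset.sum_lt_sum
    · intro T hT
      have hcard : T.card + 2 ≤ N := by
        have := Finset.card_le_card (Finset.mem_powerset.mp hT)
        omega
      exact mul_le_mul_of_nonneg_left (hFmono (T.card + 1) hcard) (hwnn T hT)
    · refine ⟨T₀, hT₀, ?_⟩
      have hcard : T₀.card + 2 ≤ N := by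
        have := Finset.card_le_card (Finset.mem_powerset.mp hT₀)
        omega
      exact mul_lt_mul_of_pos_left (hFstrict (T₀.card + 1) (by omega) hcard) hwT₀
  -- rewrite utilities
  have hUi' : q * ((1 - p j) * B + p j * A) - r i = 0 := by
    rw [← hUi]
    unfold moveUtil
    rw [← hins_j, mysplit p (fun n => F (n + 1)) S j hjS]
  have hUj' : q * ((1 - p i) * B + p i * A) - r j = 0 := by
    rw [← hUj]
    unfold moveUtil
    rw [← hins_i, mysplit p (fun n => F (n + 1)) S i hiS]
  -- r i ≤ r j
  have hr_le : ∀ b, b ≤ N → ∀ a, a ≤ b → r a ≤ r b := by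
    intro b
    induction b with
    | zero =>
      intro _ a ha
      have : a = 0 := Nat.le_zero.mp ha
      rw [this]
    | succ n ih =>
      intro hbN a ha
      rcases Nat.eq_or_lt_of_le ha with rfl | h
      · exact le_refl _
      · exact le_trans (ih (by omega) a (by omega)) (hrmono n hbN)
  have hrij : r i ≤ r j := by
    simp only [Finset.mem_Icc] at hj
    exact hr_le j hj.2 i (le_of_lt hij)
  by_contra hc
  push_neg at hc
  have h1 : 0 < (p i - p j) * (B - A) := mul_pos (by linarith) (by linarith)
  have h2 : 0 < q * ((p i - p j) * (B - A)) := mul_pos hq0 h1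
  have key : q * ((1 - p i) * B + p i * A) - q * ((1 - p j) * B + p j * A)
      = -(q * ((p i - p j) * (B - A))) := by ring
  linarith [key, h2, hUi', hUj', hrij]


end
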